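/- Let (R,m) be a one-dimensional Cohen-Macaulay local ring with canonical ideal C and minimal reduction (a) of C. Then the canonical degree cdeg(R) = λ(C/(a)) is nonnegative, and cdeg(R) = 0 if and only if C is a principal ideal (equivalently R is Gorenstein). -/

import Mathlib

/-- The length of an `R`-module, realized as the Krull dimension of its lattice of
submodules. -/
noncomputable def moduleLength (R M : Type*) [CommRing R] [AddCommGroup M] [Module R M] :
    WithBot ℕ∞ :=
  Order.krullDim (Submodule R M)

/-- An ideal `C` of a one-dimensional Cohen-Macaulay local ring is a *canonical ideal* iff it
is proper, contains a non-zero-divisor, and every ideal containing a non-zero-divisor is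
`C`-reflexive: `C : (C : I) = I` (Herzog–Kunz). -/
def IsCanonicalIdeal (R : Type*) [CommRing R] (C : Ideal R) : Prop :=
  C ≠ ⊤ ∧ (∃ a ∈ C, a ∈ nonZeroDivisors R) ∧
    ∀ I : Ideal R, (∃ b ∈ I, b ∈ nonZeroDivisors R) →
      Submodule.colon C (Submodule.colon C I) = I

/-- If a principal ideal `C` containing a non-zero-divisor has `(a)` (with `a ∈ C`) as a
reduction, then `C = (a)`. -/
lemma principal_eq_span_of_reduction {R : Type*} [CommRing R] {C : Ideal R}
    (hnzd : ∃ b ∈ C, b ∈ nonZeroDivisors R) {a : R} (haC : a ∈ C)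
    (hred : ∃ n, C ^ (n + 1) = Ideal.span {a} * C ^ n) (hp : C.IsPrincipal) :
    C = Ideal.span {a} := by
  obtain ⟨c, hc⟩ := hp
  have hc' : C = Ideal.span {c} := hc
  obtain ⟨b, hbC, hb⟩ := hnzd
  -- c is a non-zero-divisor
  obtain ⟨d, hd⟩ : c ∣ b := (Ideal.mem_span_singleton).mp (hc' ▸ hbC)
  have hcnzd : c ∈ nonZeroDivisors R := by
    refine mem_nonZeroDivisors_iff_right.mpr fun z hz => ?_
    apply (mul_right_mem_nonZeroDivisors_eq_zero_iff hb).mp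
    rw [hd, ← mul_assoc, hz, zero_mul]
  obtain ⟨n, hn⟩ := hred
  rw [hc', Ideal.span_singleton_pow, Ideal.span_singleton_pow,
    Ideal.span_singleton_mul_span_singleton] at hn
  obtain ⟨u, hu⟩ : a * c ^ n ∣ c ^ (n + 1) := by
    rw [← Ideal.mem_span_singleton, ← hn]
    exact Ideal.mem_span_singleton_self _
  obtain ⟨r, hr⟩ : c ∣ a := (Ideal.mem_span_singleton).mp (hc' ▸ haC)
  have hcn : c ^ (n + 1) ∈ nonZeroDivisors R := pow_mem hcnzd _
  have h1 : c ^ (n + 1) * (1 - r * u) = 0 := by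
    linear_combination hu + c ^ n * u * hr
  have h2 : (1 : R) - r * u = 0 := (mul_right_mem_nonZeroDivisors_eq_zero_iff hcn).mp (by rw [mul_comm]; exact h1)
  have hrunit : IsUnit r := IsUnit.of_mul_eq_one u (by linear_combination -h2)
  rw [hc', hr]
  exact (Ideal.span_singleton_mul_right_unit hrunit c).symm

/-- Let `(R, 𝔪)` be a one-dimensional Cohen-Macaulay local ring with
canonical ideal `C` and minimal reduction `(a)` of `C`.  Then the canonical degree
`cdeg(R) = λ(C/(a))` is nonnegative, and `cdeg(R) = 0` if and only if `C` is a principal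
ideal (equivalently, `R` is Gorenstein). -/
theorem cdeg_nonneg_and_eq_zero_iff_principal {R : Type*} [CommRing R] [IsNoetherianRing R]
    [IsLocalRing R] (hdim : ringKrullDim R = 1)
    (hdepth : ∃ r ∈ IsLocalRing.maximalIdeal R, r ∈ nonZeroDivisors R)
    (C : Ideal R) (hC : IsCanonicalIdeal R C)
    (a : R) (haC : a ∈ C) (hred : ∃ n, C ^ (n + 1) = Ideal.span {a} * C ^ n) :
    0 ≤ moduleLength R (↥C ⧸ Submodule.comap C.subtype (Ideal.span {a})) ∧
      (moduleLength R (↥C ⧸ Submodule.comap C.subtype (Ideal.span {a})) = 0 ↔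
        C.IsPrincipal) := by
  constructor
  · exact Order.krullDim_nonneg
  constructor
  · -- length zero implies the quotient is trivial, hence C = (a)
    intro h0
    by_cases hsub : Subsingleton (↥C ⧸ Submodule.comap C.subtype (Ideal.span {a}))
    · have hle : C ≤ Ideal.span {a} := by
        intro x hx
        have : (⟨x, hx⟩ : C) ∈ Submodule.comap C.subtype (Ideal.span {a}) := by
          rw [← Submodule.Quotient.mk_eq_zero]
          exact Subsingleton.elim _ _
        exact this
      have : C = Ideal.span {a} :=
        le_antisymm hle ((Ideal.span_singleton_le_iff_mem _).mpr haC)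
      exact ⟨⟨a, this⟩⟩
    · exfalso
      have hbt : (⊥ : Submodule R (↥C ⧸ Submodule.comap C.subtype (Ideal.span {a}))) < ⊤ := by
        rcases not_subsingleton_iff_nontrivial.mp hsub with h
        exact bot_lt_top
      have hchain := Order.LTSeries.length_le_krullDim
        (((RelSeries.singleton (α := Submodule R
          (↥C ⧸ Submodule.comap C.subtype (Ideal.span {a}))) {(x, y) : _ × _ | x < y} ⊥).snoc ⊤
          (by simpa using hbt)))
      simp only [RelSeries.snoc_length, RelSeries.singleton_length] at hchain
      rw [moduleLength] at h0
      rw [h0] at hchain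
      norm_num at hchain
  · -- C principal implies C = (a), so the quotient is trivial
    intro hp
    have hCa : C = Ideal.span {a} := principal_eq_span_of_reduction hC.2.1 haC hred hp
    have hcomap : Submodule.comap C.subtype (Ideal.span {a}) = ⊤ := by
      rw [eq_top_iff]
      rintro ⟨x, hx⟩ _
      exact (hCa ▸ hx : x ∈ Ideal.span {a})
    have hsub : Subsingleton (↥C ⧸ Submodule.comap C.subtype (Ideal.span {a})) := by
      rw [hcomap]
      exact Submodule.Quotient.subsingleton_iff.mpr rfl
    refine le_antisymm ?_ Order.krullDim_nonneg
    exact Order.krullDim_nonpos_of_subsingleton
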